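/- Let G be a finite tree on a vertex set V with at least two vertices, with positive edge weights, and let d_T denote the associated tree metric on V. If there exists a map f : V → ℝ^n such that d_1(f(u), f(v)) = d_T(u, v) for all u, v ∈ V, then the number of leaves of G is at most 2n. (Equivalently, a finite metric tree with more than 2n leaves cannot be embedded isometrically into (ℝ^n, d_1).) -/

import Mathlib

open SimpleGraph

private lemma l1_dist_eq (n : ℕ) (x y : PiLp 1 (fun _ : Fin n => ℝ)) :
    dist x y = ∑ i, dist (x i) (y i) := by
  rw [PiLp.dist_eq_sum (by norm_num)]
  simp

private lemma between_of_abs_eq {a b c : ℝ} (h : |a - c| = |a - b| + |b - c|)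
    (hab : b < a) : c ≤ b := by
  rcases abs_cases (a - c) with ⟨h1, h1'⟩ | ⟨h1, h1'⟩ <;>
    rcases abs_cases (a - b) with ⟨h2, h2'⟩ | ⟨h2, h2'⟩ <;>
      rcases abs_cases (b - c) with ⟨h3, h3'⟩ | ⟨h3, h3'⟩ <;> linarith

private lemma between_of_abs_eq' {a b c : ℝ} (h : |a - c| = |a - b| + |b - c|)
    (hab : a < b) : b ≤ c := by
  have := between_of_abs_eq (a := -a) (b := -b) (c := -c) ?_ (by linarith)
  · linarith
  · rw [show (-a - -c) = -(a - c) by ring, show (-a - -b) = -(a-b) by ring,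
      show (-b - -c) = -(b-c) by ring, abs_neg, abs_neg, abs_neg]
    exact h

theorem tree_leaves_le_two_mul_of_embed_l1 (n : ℕ) (V : Type*) [Fintype V]
    [DecidableEq V] (G : SimpleGraph V) [DecidableRel G.Adj]
    (hG : G.IsTree) (hV : 1 < Fintype.card V)
    (w : Sym2 V → ℝ) (hw : ∀ e ∈ G.edgeSet, 0 < w e)
    (dT : V → V → ℝ)
    (hdT : ∀ (u v : V) (p : G.Walk u v), p.IsPath → dT u v = (p.edges.map w).sum)
    (f : V → PiLp 1 (fun _ : Fin n => ℝ)) (hf : ∀ u v : V, dist (f u) (f v) = dT u v) :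
    (Finset.univ.filter fun v : V => G.degree v = 1).card ≤ 2 * n := by
  classical
  -- choose the unique neighbor of each leaf
  have hnb : ∀ ℓ : V, ∃ u : V, G.degree ℓ = 1 → G.neighborFinset ℓ = {u} := by
    intro ℓ
    by_cases h : G.degree ℓ = 1
    · obtain ⟨u, hu⟩ := Finset.card_eq_one.mp (by rw [G.card_neighborFinset_eq_degree, h])
      exact ⟨u, fun _ => hu⟩
    · exact ⟨ℓ, fun h' => absurd h' h⟩
  choose nbr hnbr using hnb
  -- adjacency to the chosen neighbor
  have hadj : ∀ ℓ : V, G.degree ℓ = 1 → G.Adj ℓ (nbr ℓ) := by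
    intro ℓ h
    have : nbr ℓ ∈ G.neighborFinset ℓ := by rw [hnbr ℓ h]; exact Finset.mem_singleton_self _
    rwa [SimpleGraph.mem_neighborFinset] at this
  -- tree-metric decomposition at a leaf
  have hdec : ∀ ℓ x : V, G.degree ℓ = 1 → x ≠ ℓ →
      dT ℓ x = w s(ℓ, nbr ℓ) + dT (nbr ℓ) x := by
    intro ℓ x h hx
    obtain ⟨q⟩ := hG.isConnected.preconnected ℓ x
    obtain ⟨p, hp⟩ := q.toPath
    cases p with
    | nil => exact absurd rfl hx
    | cons hadj' q' =>
      rename_i b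
      have hb : b ∈ G.neighborFinset ℓ := by rwa [SimpleGraph.mem_neighborFinset]
      rw [hnbr ℓ h, Finset.mem_singleton] at hb
      subst hb
      rw [hdT _ _ _ hp, hdT _ _ q' hp.of_cons]
      simp [SimpleGraph.Walk.edges_cons]
  -- the edge weight to the neighbor, and its positivity
  have hedge : ∀ ℓ : V, G.degree ℓ = 1 → dT ℓ (nbr ℓ) = w s(ℓ, nbr ℓ) := by
    intro ℓ h
    have hA := hadj ℓ h
    have hpath : (SimpleGraph.Walk.cons hA SimpleGraph.Walk.nil).IsPath := by
      simp [hA.ne]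
    rw [hdT _ _ _ hpath]
    simp
  have hfne : ∀ ℓ : V, G.degree ℓ = 1 → ∃ i : Fin n, f ℓ i ≠ f (nbr ℓ) i := by
    intro ℓ h
    have hpos : 0 < dist (f ℓ) (f (nbr ℓ)) := by
      rw [hf, hedge ℓ h]
      exact hw _ ((G.mem_edgeSet).mpr (hadj ℓ h))
    have : f ℓ ≠ f (nbr ℓ) := by
      intro hEq; rw [hEq, _root_.dist_self] at hpos; exact lt_irrefl _ hpos
    by_contra hcon
    push_neg at hcon
    exact this (PiLp.ext hcon)
  -- coordinatewise betweenness
  have hbet : ∀ ℓ x : V, G.degree ℓ = 1 → x ≠ ℓ → ∀ i : Fin n,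
      |f ℓ i - f x i| = |f ℓ i - f (nbr ℓ) i| + |f (nbr ℓ) i - f x i| := by
    intro ℓ x h hx
    have hsum : ∑ i, dist (f ℓ i) (f x i)
        = ∑ i, (dist (f ℓ i) (f (nbr ℓ) i) + dist (f (nbr ℓ) i) (f x i)) := by
      rw [Finset.sum_add_distrib, ← l1_dist_eq, ← l1_dist_eq, ← l1_dist_eq,
        hf, hf, hf, hdec ℓ x h hx, hedge ℓ h]
    have hle : ∀ i ∈ (Finset.univ : Finset (Fin n)),
        dist (f ℓ i) (f x i) ≤ dist (f ℓ i) (f (nbr ℓ) i) + dist (f (nbr ℓ) i) (f x i) :=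
      fun i _ => dist_triangle _ _ _
    have := (Finset.sum_eq_sum_iff_of_le hle).mp hsum
    intro i
    have hi := this i (Finset.mem_univ i)
    simpa [Real.dist_eq] using hi
  -- the injection into Fin n × Prop
  choose idx hidx using hfne
  set S := Finset.univ.filter fun v : V => G.degree v = 1 with hS
  rcases S.eq_empty_or_nonempty with hSe | ⟨ℓ₀, hℓ₀⟩
  · rw [hSe]; simp
  have hℓ₀' : G.degree ℓ₀ = 1 := by
    rw [hS, Finset.mem_filter] at hℓ₀; exact hℓ₀.2
  have i₀ : Fin n := idx ℓ₀ hℓ₀'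
  set g : V → Fin n × Prop := fun ℓ =>
    if h : G.degree ℓ = 1 then (idx ℓ h, f ℓ (idx ℓ h) < f (nbr ℓ) (idx ℓ h))
    else (i₀, True) with hg
  have hinj : Set.InjOn g S := by
    intro ℓ hℓ ℓ' hℓ' hgeq
    rw [hS, Finset.coe_filter] at hℓ hℓ'
    have h : G.degree ℓ = 1 := hℓ.2
    have h' : G.degree ℓ' = 1 := hℓ'.2
    by_contra hne
    rw [hg] at hgeq
    simp only [dif_pos h, dif_pos h', Prod.mk.injEq] at hgeq
    obtain ⟨hidxeq, hpropeq⟩ := hgeq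
    set i := idx ℓ h with hi
    have ha : f ℓ i ≠ f (nbr ℓ) i := hidx ℓ h
    have hc : f ℓ' i ≠ f (nbr ℓ') i := by rw [hidxeq]; exact hidx ℓ' h'
    have hprop : (f ℓ i < f (nbr ℓ) i) ↔ (f ℓ' i < f (nbr ℓ') i) := by
      rw [← hidxeq] at hpropeq
      exact hpropeq ▸ Iff.rfl
    have heq1 := hbet ℓ ℓ' h (fun hh => hne hh.symm) i
    have heq2 := hbet ℓ' ℓ h' hne i
    rcases lt_or_gt_of_ne ha with hlt | hgt
    · have hlt' : f ℓ' i < f (nbr ℓ') i := hprop.mp hlt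
      have h1 := between_of_abs_eq' heq1 hlt
      have h2 := between_of_abs_eq' heq2 hlt'
      linarith
    · have hgt' : f (nbr ℓ') i < f ℓ' i :=
        lt_of_le_of_ne (not_lt.mp (fun hh => (not_lt.mpr (le_of_lt hgt)) (hprop.mpr hh)))
          (Ne.symm hc)
      have h1 := between_of_abs_eq heq1 hgt
      have h2 := between_of_abs_eq heq2 hgt'
      linarith
  have hcard := Finset.card_le_card_of_injOn g (fun x _ => Finset.mem_univ (g x)) hinj
  calc S.card ≤ (Finset.univ : Finset (Fin n × Prop)).card := hcard
    _ = 2 * n := by simp [Fintype.card_prop, Nat.mul_comm]
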